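/- For every $m \in \mathbb{N}$, the function $f(x) = \frac{(1+x)^m}{1 + x + x^2 + \dots + x^m}$ is decreasing on $[1,\infty)$, and consequently $\sup_{k \in \mathbb{N}, k \ge 1} \frac{(1+k^2)^m}{1 + k^2 + k^4 + \dots + k^{2m}} = \frac{2^m}{m+1}$ (attained at $k=1$). -/

import Mathlib

open Finset

-- The "phi" inequality: for x ≥ 1, ∑_{α<m} (m-1-2α) x^α ≤ 0.
lemma phi_nonpos13 (m : ℕ) {x : ℝ} (hx : 1 ≤ x) :
    ∑ α ∈ Finset.range m, ((m : ℝ) - 1 - 2 * α) * x ^ α ≤ 0 := by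
  have hx0 : (0:ℝ) ≤ x := le_trans zero_le_one hx
  have hrefl := Finset.sum_range_reflect
    (fun α => ((m : ℝ) - 1 - 2 * α) * x ^ α) m
  have h2 : (2:ℝ) * ∑ α ∈ Finset.range m, ((m : ℝ) - 1 - 2 * α) * x ^ α
      = ∑ α ∈ Finset.range m, (((m : ℝ) - 1 - 2 * α) * x ^ α
          + ((m : ℝ) - 1 - 2 * (↑(m - 1 - α) : ℝ)) * x ^ (m - 1 - α)) := by
    rw [Finset.sum_add_distrib, two_mul]
    congr 1
    exact hrefl.symm
  have hsum : ∑ α ∈ Finset.range m, (((m : ℝ) - 1 - 2 * α) * x ^ α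
          + ((m : ℝ) - 1 - 2 * (↑(m - 1 - α) : ℝ)) * x ^ (m - 1 - α)) ≤ 0 := by
    apply Finset.sum_nonpos
    intro α hα
    have hαm : α ≤ m - 1 := Nat.le_sub_one_of_lt (Finset.mem_range.mp hα)
    have hm1 : 1 ≤ m := Nat.one_le_iff_ne_zero.mpr (by rintro rfl; exact absurd hα (by simp))
    have hcast : (↑(m - 1 - α) : ℝ) = (m:ℝ) - 1 - α := by
      push_cast [Nat.cast_sub hαm, Nat.cast_sub hm1]
      ring
    rw [hcast]
    have hco : ((m:ℝ) - 1 - 2 * ((m:ℝ) - 1 - α)) = -((m:ℝ) - 1 - 2*α) := by ring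
    rw [hco]
    rcases le_or_gt (2 * α + 1) m with h | h
    · -- coefficient nonneg, α ≤ m-1-α
      have hc : (0:ℝ) ≤ (m:ℝ) - 1 - 2*α := by
        have : (2*α + 1 : ℝ) ≤ m := by exact_mod_cast h
        push_cast at this ⊢; linarith
      have hle : α ≤ m - 1 - α := by omega
      have hp : x ^ α ≤ x ^ (m - 1 - α) := pow_le_pow_right₀ hx hle
      nlinarith
    · have hc : (m:ℝ) - 1 - 2*α ≤ 0 := by
        have : (m:ℝ) ≤ 2*α + 1 := by exact_mod_cast h.le
        linarith
      have hle : m - 1 - α ≤ α := by omega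
      have hp : x ^ (m - 1 - α) ≤ x ^ α := pow_le_pow_right₀ hx hle
      nlinarith
  linarith

lemma key13 (m : ℕ) {x : ℝ} (hx : 1 ≤ x) :
    (m : ℝ) * ∑ α ∈ Finset.range (m+1), x ^ α
      ≤ (1 + x) * ∑ α ∈ Finset.range (m+1), (α : ℝ) * x ^ (α - 1) := by
  have eD : ∑ α ∈ Finset.range (m+1), (α : ℝ) * x ^ (α - 1)
      = ∑ α ∈ Finset.range m, ((α : ℝ) + 1) * x ^ α := by
    rw [Finset.sum_range_succ']
    push_cast
    simp
  have eShift : ∑ α ∈ Finset.range m, ((α : ℝ) + 1) * x ^ (α + 1)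
      = ∑ α ∈ Finset.range m, (α : ℝ) * x ^ α + m * x ^ m := by
    have h1 := Finset.sum_range_succ' (fun α => (α : ℝ) * x ^ α) m
    have h2 := Finset.sum_range_succ (fun α => (α : ℝ) * x ^ α) m
    have h3 := h1.symm.trans h2
    push_cast at h3
    norm_num at h3
    linarith [h3]
  have expand : (1 + x) * ∑ α ∈ Finset.range m, ((α : ℝ) + 1) * x ^ α
      = ∑ α ∈ Finset.range m, ((α : ℝ) + 1) * x ^ α
        + ∑ α ∈ Finset.range m, ((α : ℝ) + 1) * x ^ (α + 1) := by
    rw [add_mul, one_mul, Finset.mul_sum]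
    congr 1
    exact Finset.sum_congr rfl fun i _ => by ring
  have eS : (m : ℝ) * ∑ α ∈ Finset.range (m+1), x ^ α
      = ∑ α ∈ Finset.range m, (m : ℝ) * x ^ α + m * x ^ m := by
    rw [Finset.sum_range_succ, mul_add, Finset.mul_sum]
  have comb : ∑ α ∈ Finset.range m, ((α : ℝ) + 1) * x ^ α
        + ∑ α ∈ Finset.range m, (α : ℝ) * x ^ α
      = ∑ α ∈ Finset.range m, (m : ℝ) * x ^ α
        - ∑ α ∈ Finset.range m, ((m : ℝ) - 1 - 2 * α) * x ^ α := by
    rw [← Finset.sum_add_distrib, ← Finset.sum_sub_distrib]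
    exact Finset.sum_congr rfl fun i _ => by ring
  have hphi := phi_nonpos13 m hx
  rw [eD, expand, eShift, eS]
  linarith [comb]

theorem stmt13 (m : ℕ) :
    AntitoneOn (fun x : ℝ => (1 + x) ^ m / ∑ α ∈ Finset.range (m + 1), x ^ α)
      (Set.Ici (1 : ℝ)) ∧
    IsGreatest
      {y : ℝ | ∃ k : ℕ, 1 ≤ k ∧
        y = (1 + (k : ℝ) ^ 2) ^ m / ∑ α ∈ Finset.range (m + 1), ((k : ℝ) ^ 2) ^ α}
      (2 ^ m / (m + 1)) := by
  set f : ℝ → ℝ := fun x => (1 + x) ^ m / ∑ α ∈ Finset.range (m + 1), x ^ α with hf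
  have hSpos : ∀ x : ℝ, 1 ≤ x → 0 < ∑ α ∈ Finset.range (m + 1), x ^ α := by
    intro x hx
    apply Finset.sum_pos
    · intro i _
      exact pow_pos (lt_of_lt_of_le one_pos hx) i
    · exact Finset.nonempty_range_add_one
  have hD : ∀ x : ℝ, 1 ≤ x → HasDerivAt f
      (((m : ℝ) * (1 + x) ^ (m - 1) * ∑ α ∈ Finset.range (m + 1), x ^ α
        - (1 + x) ^ m * ∑ α ∈ Finset.range (m + 1), (α : ℝ) * x ^ (α - 1))
        / (∑ α ∈ Finset.range (m + 1), x ^ α) ^ 2) x := by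
    intro x hx
    have h1 : HasDerivAt (fun x : ℝ => (1 + x) ^ m) ((m : ℝ) * (1 + x) ^ (m - 1)) x := by
      have := ((hasDerivAt_id x).const_add 1).fun_pow m
      simpa using this
    have h2 : HasDerivAt (fun x : ℝ => ∑ α ∈ Finset.range (m + 1), x ^ α)
        (∑ α ∈ Finset.range (m + 1), (α : ℝ) * x ^ (α - 1)) x :=
      HasDerivAt.fun_sum fun i _ => hasDerivAt_pow i x
    exact h1.div h2 (ne_of_gt (hSpos x hx))
  have hanti : AntitoneOn f (Set.Ici (1 : ℝ)) := by
    apply antitoneOn_of_deriv_nonpos (convex_Ici 1)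
    · intro x hx
      exact (hD x hx).continuousAt.continuousWithinAt
    · intro x hx
      rw [interior_Ici] at hx
      exact ((hD x (le_of_lt hx)).differentiableAt).differentiableWithinAt
    · intro x hx
      rw [interior_Ici] at hx
      have hx1 : (1:ℝ) ≤ x := le_of_lt hx
      rw [(hD x hx1).deriv]
      apply div_nonpos_of_nonpos_of_nonneg _ (sq_nonneg _)
      rw [sub_nonpos]
      rcases Nat.eq_zero_or_pos m with rfl | hm
      · simp
      · obtain ⟨n, rfl⟩ := Nat.exists_eq_add_of_le hm
        have hp : (0:ℝ) ≤ (1 + x) ^ n := by positivity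
        have hk := key13 (1 + n) hx1
        calc ((1 + n : ℕ) : ℝ) * (1 + x) ^ (1 + n - 1)
              * ∑ α ∈ Finset.range (1 + n + 1), x ^ α
            = (1 + x) ^ n * (((1 + n : ℕ) : ℝ) * ∑ α ∈ Finset.range (1 + n + 1), x ^ α) := by
              rw [Nat.add_sub_cancel_left]; ring
          _ ≤ (1 + x) ^ n * ((1 + x) * ∑ α ∈ Finset.range (1 + n + 1), (α : ℝ) * x ^ (α - 1)) :=
              mul_le_mul_of_nonneg_left hk hp
          _ = (1 + x) ^ (1 + n) * ∑ α ∈ Finset.range (1 + n + 1), (α : ℝ) * x ^ (α - 1) := by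
              rw [pow_add]; ring
  have hf1 : f 1 = 2 ^ m / (m + 1) := by
    simp [hf, Finset.sum_const, Finset.card_range]
    norm_num
  refine ⟨hanti, ⟨⟨1, le_refl 1, ?_⟩, ?_⟩⟩
  · norm_num [Finset.sum_const, Finset.card_range]
  · rintro y ⟨k, hk, rfl⟩
    have hk1 : (1:ℝ) ≤ (k : ℝ) := by exact_mod_cast hk
    have hk2 : (1:ℝ) ≤ (k : ℝ) ^ 2 := one_le_pow₀ hk1
    have := hanti (Set.self_mem_Ici) (Set.mem_Ici.mpr hk2) hk2
    rw [hf1] at this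
    exact this
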